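/- For every x = (x₁,x₂,x₃) ∈ ℝ³ one has det φ(x) = 1 and |φ(x)|² = 2(1 + x₁² + x₂²); the map φ : ℝ³ → M² is surjective onto SL(2,ℝ); and φ(x) ∈ SO(2,ℝ) if and only if (x₁,x₂) = (0,0). -/

import Mathlib

open Matrix

noncomputable section

/-- `M²`: the space of 2×2 real matrices. -/
abbrev M2 : Type := Matrix (Fin 2) (Fin 2) ℝ

/-- Frobenius inner product `⟨A,B⟩ = tr(AᵀB)`. -/
def mip (A B : M2) : ℝ := (Aᵀ * B).trace

/-- Frobenius norm `|A| = ⟨A,A⟩^{1/2}`. -/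
def fnorm (A : M2) : ℝ := Real.sqrt (mip A A)

/-- The matrix Z = [[0,−1],[1,0]]. -/
def Zm : M2 := !![0, -1; 1, 0]

/-- The matrix K = [[1,0],[0,−1]]. -/
def Km : M2 := !![1, 0; 0, -1]

/-- The matrix M = [[0,1],[1,0]]. -/
def Mm : M2 := !![0, 1; 1, 0]

/-- Cofactor: cof [[a,b],[c,d]] = [[d,−c],[−b,a]]. -/
def cofm (A : M2) : M2 := !![A 1 1, -(A 1 0); -(A 0 1), A 0 0]

/-- Membership in SO(2,ℝ). -/
def isSO (U : M2) : Prop := U.det = 1 ∧ U⁻¹ = Uᵀ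

/-- The rotation U(θ) = cos θ·I + sin θ·Z. -/
def Um (θ : ℝ) : M2 := Real.cos θ • (1 : M2) + Real.sin θ • Zm

/-- Invariant X₁(A,B) = ½|B|² + (κ/2)|A|². -/
def X1 (κ : ℝ) (A B : M2) : ℝ := (1/2) * mip B B + (κ/2) * mip A A

/-- Invariant X₂(A,B) = ½⟨ZA − AZ, B⟩. -/
def X2 (A B : M2) : ℝ := (1/2) * mip (Zm * A - A * Zm) B

/-- Invariant X₃(A,B) = ½⟨ZA + AZ, B⟩. -/
def X3 (A B : M2) : ℝ := (1/2) * mip (Zm * A + A * Zm) B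

/-- Lagrange multiplier Λ(A,B) = 2(κ − det B)/|A|². -/
def Lam (κ : ℝ) (A B : M2) : ℝ := 2 * (κ - B.det) / (mip A A)

attribute [local instance] Matrix.normedAddCommGroup Matrix.normedSpace

/-- ρ(x) = (2 + x₁² + x₂²)^{1/2}. -/
def rho (x1 x2 : ℝ) : ℝ := Real.sqrt (2 + x1 ^ 2 + x2 ^ 2)

/-- φ(x) = (1/√2)(ρ(x)cos x₃ · I + ρ(x)sin x₃ · Z + x₁·K + x₂·M). -/
def phi (x1 x2 x3 : ℝ) : M2 :=
  (Real.sqrt 2)⁻¹ •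
    ((rho x1 x2 * Real.cos x3) • (1 : M2) + (rho x1 x2 * Real.sin x3) • Zm
      + x1 • Km + x2 • Mm)

lemma rho_sq (x1 x2 : ℝ) : rho x1 x2 ^ 2 = 2 + x1^2 + x2^2 :=
  Real.sq_sqrt (by positivity)

lemma transpose_fin_two' (a b c d : ℝ) : (!![a, b; c, d] : M2)ᵀ = !![a, c; b, d] := by
  ext i j; fin_cases i <;> fin_cases j <;> simp

lemma phi_eq (x1 x2 x3 : ℝ) : phi x1 x2 x3 =
    !![(Real.sqrt 2)⁻¹ * (rho x1 x2 * Real.cos x3 + x1),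
       (Real.sqrt 2)⁻¹ * (-(rho x1 x2 * Real.sin x3) + x2);
       (Real.sqrt 2)⁻¹ * (rho x1 x2 * Real.sin x3 + x2),
       (Real.sqrt 2)⁻¹ * (rho x1 x2 * Real.cos x3 - x1)] := by
  unfold phi Zm Km Mm
  ext i j
  fin_cases i <;> fin_cases j <;> simp [Matrix.one_apply] <;> ring_nf

lemma sqrt2_sq : (Real.sqrt 2 : ℝ)^2 = 2 := Real.sq_sqrt (by norm_num)
lemma inv_sqrt2_sq : ((Real.sqrt 2 : ℝ)⁻¹)^2 = 1/2 := by
  rw [inv_pow, sqrt2_sq]; norm_num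

lemma phi_det (x1 x2 x3 : ℝ) : (phi x1 x2 x3).det = 1 := by
  rw [phi_eq, Matrix.det_fin_two_of]
  have h1 := Real.sin_sq_add_cos_sq x3
  have h2 := rho_sq x1 x2
  have h3 := inv_sqrt2_sq
  linear_combination (((Real.sqrt 2)⁻¹)^2 * (rho x1 x2)^2) * h1
    + ((Real.sqrt 2)⁻¹)^2 * h2 + 2 * h3

lemma phi_mip (x1 x2 x3 : ℝ) :
    ((phi x1 x2 x3)ᵀ * (phi x1 x2 x3)).trace = 2 * (1 + x1 ^ 2 + x2 ^ 2) := by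
  rw [phi_eq, transpose_fin_two', Matrix.mul_fin_two, Matrix.trace_fin_two_of]
  have h1 := Real.sin_sq_add_cos_sq x3
  have h2 := rho_sq x1 x2
  have h3 := inv_sqrt2_sq
  linear_combination (2*((Real.sqrt 2)⁻¹)^2 * (rho x1 x2)^2) * h1
    + (2*((Real.sqrt 2)⁻¹)^2) * h2 + (4 + 4*x1^2 + 4*x2^2) * h3

lemma phi_mul_transpose (x3 : ℝ) : phi 0 0 x3 * (phi 0 0 x3)ᵀ = 1 := by
  rw [phi_eq, transpose_fin_two', Matrix.mul_fin_two, Matrix.one_fin_two]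
  have h1 := Real.sin_sq_add_cos_sq x3
  have h2 := rho_sq 0 0
  have h3 := inv_sqrt2_sq
  ext i j
  fin_cases i <;> fin_cases j <;> simp <;>
    first
      | ring1
      | linear_combination (((Real.sqrt 2)⁻¹)^2 * (rho 0 0)^2) * h1
          + ((Real.sqrt 2)⁻¹)^2 * h2 + 2 * h3

lemma phi_isSO_iff (x1 x2 x3 : ℝ) :
    ((phi x1 x2 x3).det = 1 ∧ (phi x1 x2 x3)⁻¹ = (phi x1 x2 x3)ᵀ) ↔ x1 = 0 ∧ x2 = 0 := by
  constructor
  · rintro ⟨hdet, hinv⟩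
    have hU : phi x1 x2 x3 * (phi x1 x2 x3)ᵀ = 1 := by
      rw [← hinv]
      exact Matrix.mul_nonsing_inv _ (by rw [hdet]; exact isUnit_one)
    have htr : ((phi x1 x2 x3)ᵀ * phi x1 x2 x3).trace = 2 := by
      rw [Matrix.trace_mul_comm, hU]
      simp [Matrix.trace_one]
    rw [phi_mip] at htr
    constructor <;> nlinarith [sq_nonneg x1, sq_nonneg x2]
  · rintro ⟨h1, h2⟩
    subst h1; subst h2
    exact ⟨phi_det 0 0 x3, Matrix.inv_eq_right_inv (phi_mul_transpose x3)⟩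

lemma phi_surj (A : M2) (hA : A.det = 1) : ∃ x1 x2 x3 : ℝ, phi x1 x2 x3 = A := by
  set a := A 0 0 with ha
  set b := A 0 1 with hb
  set c := A 1 0 with hc
  set d := A 1 1 with hd
  have hdet : a * d - b * c = 1 := by
    rw [ha, hb, hc, hd, ← Matrix.det_fin_two]; exact hA
  set x1 : ℝ := (a - d) / Real.sqrt 2 with hx1
  set x2 : ℝ := (b + c) / Real.sqrt 2 with hx2
  set p : ℝ := (a + d) / Real.sqrt 2 with hp
  set q : ℝ := (c - b) / Real.sqrt 2 with hq
  have h2 : (Real.sqrt 2 : ℝ) ^ 2 = 2 := sqrt2_sq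
  have h2ne : (Real.sqrt 2 : ℝ) ≠ 0 := by positivity
  have h3 := inv_sqrt2_sq
  have hpq : p ^ 2 + q ^ 2 = 2 + x1 ^ 2 + x2 ^ 2 := by
    rw [hp, hq, hx1, hx2]
    field_simp
    linear_combination (2 * Real.sqrt 2 ^ 2) * hdet + (-2*a*d + 2*b*c) * h2
  set z : ℂ := ⟨p, q⟩ with hz
  have habs : ‖z‖ = rho x1 x2 := by
    rw [Complex.norm_def, rho]
    congr 1
    rw [Complex.normSq_mk]
    linear_combination hpq
  have hrpos : (0:ℝ) < rho x1 x2 := Real.sqrt_pos.mpr (by positivity)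
  have habsne : ‖z‖ ≠ 0 := by rw [habs]; exact ne_of_gt hrpos
  have hzne : z ≠ 0 := by
    intro h
    rw [h, norm_zero] at habsne
    exact habsne rfl
  refine ⟨x1, x2, Complex.arg z, ?_⟩
  have hcos : rho x1 x2 * Real.cos (Complex.arg z) = p := by
    rw [Complex.cos_arg hzne, ← habs]
    exact mul_div_cancel₀ _ habsne
  have hsin : rho x1 x2 * Real.sin (Complex.arg z) = q := by
    rw [Complex.sin_arg, ← habs]
    exact mul_div_cancel₀ _ habsne
  rw [phi_eq, hcos, hsin]
  ext i j
  fin_cases i <;> fin_cases j <;> simp <;>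
    simp only [hp, hq, hx1, hx2, ← ha, ← hb, ← hc, ← hd] <;>
    first
      | exact absurd rfl (by simp)
      | linear_combination (2 * a) * h3
      | linear_combination (2 * b) * h3
      | linear_combination (2 * c) * h3
      | linear_combination (2 * d) * h3
      | ring1

/-- basic properties of the parameterization φ of SL(2,ℝ). -/

theorem phi_properties :
    (∀ x1 x2 x3 : ℝ, (phi x1 x2 x3).det = 1 ∧
        mip (phi x1 x2 x3) (phi x1 x2 x3) = 2 * (1 + x1 ^ 2 + x2 ^ 2) ∧
        (isSO (phi x1 x2 x3) ↔ x1 = 0 ∧ x2 = 0)) ∧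
    (∀ A : M2, A.det = 1 → ∃ x1 x2 x3 : ℝ, phi x1 x2 x3 = A) := by
  constructor
  · intro x1 x2 x3
    exact ⟨phi_det x1 x2 x3, phi_mip x1 x2 x3, phi_isSO_iff x1 x2 x3⟩
  · exact phi_surj
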